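/- With notation as in the van Kampen pushout computation: given a pushout of groupoids over J with totally disconnected C and connected A, B, and p ∈ J, the free group F on { f_x : x ∈ J, x ≠ p } is a retract of the vertex group G(p) of the pushout. Consequently, if J has more than one element then G(p) is nontrivial, and if J has more than two elements then G(p) is nonabelian. -/

import Mathlib

open CategoryTheory

/-- The hom-type of a groupoid structure `g` on `J`. -/
abbrev GHom {J : Type} (g : Groupoid J) (x y : J) : Type :=
  @Quiver.Hom J g.toCategory.toCategoryStruct.toQuiver x y

/-- Identity morphism of `g`. -/
abbrev Gid {J : Type} (g : Groupoid J) (x : J) : GHom g x x :=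
  g.toCategory.toCategoryStruct.id x

/-- Composition in `g` (diagrammatic order). -/
abbrev Gcomp {J : Type} (g : Groupoid J) {x y z : J}
    (f : GHom g x y) (f' : GHom g y z) : GHom g x z :=
  g.toCategory.toCategoryStruct.comp f f'

/-- Inverse in `g`. -/
abbrev Ginv {J : Type} (g : Groupoid J) {x y : J} (f : GHom g x y) : GHom g y x :=
  g.inv f

/-- A morphism of groupoids over `J`: a functor which is the identity on objects. -/
structure OverJHom {J : Type} (g h : Groupoid J) where
  map : ∀ {x y : J}, GHom g x y → GHom h x y
  map_id : ∀ x : J, map (Gid g x) = Gid h x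
  map_comp : ∀ {x y z : J} (f : GHom g x y) (f' : GHom g y z),
    map (Gcomp g f f') = Gcomp h (map f) (map f')

/-- Composition of morphisms of groupoids over `J`. -/
def OverJHom.comp' {J : Type} {g h k : Groupoid J}
    (F : OverJHom g h) (F' : OverJHom h k) : OverJHom g k where
  map f := F'.map (F.map f)
  map_id x := by show F'.map (F.map (Gid g x)) = Gid k x; rw [F.map_id, F'.map_id]
  map_comp f f' := by
    show F'.map (F.map (Gcomp g f f')) = Gcomp k (F'.map (F.map f)) (F'.map (F.map f'))
    rw [F.map_comp, F'.map_comp]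

/-- The vertex group structure on `GHom g p p`. -/
noncomputable instance {J : Type} (g : Groupoid J) (p : J) : Group (GHom g p p) :=
  @Groupoid.vertexGroup J g p


/-- Extensionality for `OverJHom`. -/
lemma OverJHom.ext' {J : Type} {g h : Groupoid J} {F G : OverJHom g h}
    (hm : ∀ (x y : J) (f : GHom g x y), F.map f = G.map f) : F = G := by
  cases F with
  | mk Fm Fi Fc =>
    cases G with
    | mk Gm Gi Gc =>
      have : @Fm = @Gm := by
        funext x y f
        exact hm x y f
      subst this
      rfl

/-- In a groupoid, a right inverse is the inverse. -/
lemma gpd_right_inv {J : Type} (h : Groupoid J) {x y : J} (a : GHom h x y) (Z : GHom h y x)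
    (hz : Gcomp h a Z = Gid h x) : Z = Ginv h a := by
  letI : Groupoid J := h
  have hz' : a ≫ Z = 𝟙 x := hz
  calc Z = 𝟙 y ≫ Z := (Category.id_comp Z).symm
    _ = (Groupoid.inv a ≫ a) ≫ Z := by rw [Groupoid.inv_comp]
    _ = Groupoid.inv a ≫ (a ≫ Z) := Category.assoc ..
    _ = Groupoid.inv a ≫ 𝟙 x := by rw [hz']
    _ = Ginv h a := Category.comp_id _

/-- Morphisms of groupoids preserve inverses. -/
lemma OverJHom.map_inv {J : Type} {g h : Groupoid J} (F : OverJHom g h) {x y : J}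
    (f : GHom g x y) : F.map (Ginv g f) = Ginv h (F.map f) := by
  apply gpd_right_inv
  rw [← F.map_comp]
  have : Gcomp g f (Ginv g f) = Gid g x := g.comp_inv f
  rw [this, F.map_id]

/-- The groupoid on `J` whose homs are all a fixed group `F`. -/
def groupGroupoid (J : Type) (F : Type) [Group F] : Groupoid J where
  Hom _ _ := F
  id _ := 1
  comp f g := f * g
  id_comp := one_mul
  comp_id := mul_one
  assoc := mul_assoc
  inv f := f⁻¹
  inv_comp := inv_mul_cancel
  comp_inv := mul_inv_cancel

/-- Retraction corollary of the van Kampen pushout computation: the free group on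
`{ f_x : x ∈ J, x ≠ p }` is a retract of the vertex group `G(p)` of the pushout
(the section carrying the generator at `x` to `f_x = (u α_x)⁻¹ (v β_x)`).
Consequently `G(p)` is nontrivial if `J` has more than one element, and nonabelian
if `J` has more than two elements. -/
theorem free_group_retract_of_pushout {J : Type}
    (gC gA gB gG : Groupoid J)
    (i : OverJHom gC gA) (j : OverJHom gC gB)
    (u : OverJHom gA gG) (v : OverJHom gB gG)
    (hcomm : i.comp' u = j.comp' v)
    (huniv : ∀ (gH : Groupoid J) (a : OverJHom gA gH) (b : OverJHom gB gH),
      i.comp' a = j.comp' b →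
      ∃! w : OverJHom gG gH, u.comp' w = a ∧ v.comp' w = b)
    (hC : ∀ x y : J, x ≠ y → IsEmpty (GHom gC x y))
    (hA : ∀ x y : J, Nonempty (GHom gA x y))
    (hB : ∀ x y : J, Nonempty (GHom gB x y))
    (p : J)
    (α : ∀ x : J, GHom gA p x) (hα : α p = Gid gA p)
    (β : ∀ x : J, GHom gB p x) (hβ : β p = Gid gB p) :
    (∃ (ι : FreeGroup {x : J // x ≠ p} →* GHom gG p p)
       (ρ : GHom gG p p →* FreeGroup {x : J // x ≠ p}),
        ρ.comp ι = MonoidHom.id (FreeGroup {x : J // x ≠ p}) ∧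
        ∀ (x : J) (hx : x ≠ p),
          ι (FreeGroup.of ⟨x, hx⟩) =
            (Gcomp gG (v.map (β x)) (Ginv gG (u.map (α x))) : GHom gG p p)) ∧
    ((∃ x : J, x ≠ p) → ∃ g : GHom gG p p, g ≠ 1) ∧
    ((∃ x y : J, x ≠ p ∧ y ≠ p ∧ x ≠ y) →
      ∃ g h : GHom gG p p, g * h ≠ h * g) := by
  classical
  set F := FreeGroup {x : J // x ≠ p} with hF
  set gH : Groupoid J := groupGroupoid J F with hgH
  set c : J → F := fun x => if h : x = p then 1 else FreeGroup.of ⟨x, h⟩ with hc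
  -- the trivial morphism on A
  set a : OverJHom gA gH :=
    { map := fun _ => (1 : F)
      map_id := fun _ => rfl
      map_comp := fun _ _ => (one_mul (1 : F)).symm } with ha
  -- the morphism on B determined by `c`
  set b : OverJHom gB gH :=
    { map := fun {x y} _ => (c x)⁻¹ * c y
      map_id := fun x => inv_mul_cancel (c x)
      map_comp := fun {x y z} f f' => by
        show (c x)⁻¹ * c z = ((c x)⁻¹ * c y) * ((c y)⁻¹ * c z)
        rw [← mul_assoc, mul_inv_cancel_right] } with hb
  have hcomm2 : i.comp' a = j.comp' b := by
    apply OverJHom.ext'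
    intro x y f
    by_cases hxy : x = y
    · subst hxy
      show (1 : F) = (c x)⁻¹ * c x
      rw [inv_mul_cancel]
    · exact ((hC x y hxy).false f).elim
  obtain ⟨w, ⟨hwu, hwv⟩, -⟩ := huniv gH a b hcomm2
  have hcp : c p = 1 := by simp [hc]
  have hu1 : ∀ x, w.map (u.map (α x)) = (1 : F) := by
    intro x
    show (u.comp' w).map (α x) = (1 : F)
    rw [hwu]
  have hv1 : ∀ x, w.map (v.map (β x)) = c x := by
    intro x
    show (v.comp' w).map (β x) = c x
    rw [hwv]
    show (c p)⁻¹ * c x = c x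
    rw [hcp, inv_one, one_mul]
  set fx : ∀ x : J, GHom gG p p :=
    fun x => Gcomp gG (v.map (β x)) (Ginv gG (u.map (α x))) with hfx
  set ρ : GHom gG p p →* F :=
    MonoidHom.mk' (fun g : GHom gG p p => (w.map g : F)) (fun g h => w.map_comp g h) with hρ
  set ι : F →* GHom gG p p :=
    FreeGroup.lift (fun x : {x : J // x ≠ p} => fx x.val) with hι
  have key : ∀ (x : J) (hx : x ≠ p), ρ (fx x) = FreeGroup.of ⟨x, hx⟩ := by
    intro x hx
    show w.map (Gcomp gG (v.map (β x)) (Ginv gG (u.map (α x)))) = _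
    rw [w.map_comp, w.map_inv, hu1, hv1]
    show c x * (1 : F)⁻¹ = FreeGroup.of ⟨x, hx⟩
    rw [inv_one, mul_one]
    simp [hc, hx]
  have hιof : ∀ (x : J) (hx : x ≠ p), ι (FreeGroup.of ⟨x, hx⟩) = fx x := by
    intro x hx
    rw [hι, FreeGroup.lift_apply_of]
  have hretr : ρ.comp ι = MonoidHom.id F := by
    apply FreeGroup.ext_hom
    rintro ⟨x, hx⟩
    show ρ (ι (FreeGroup.of ⟨x, hx⟩)) = FreeGroup.of ⟨x, hx⟩
    rw [hιof x hx, key x hx]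
  -- homomorphism to permutations, to detect nontriviality/noncommutativity
  set σ : F →* Equiv.Perm J :=
    FreeGroup.lift (fun z : {x : J // x ≠ p} => Equiv.swap p z.val) with hσ
  have hσof : ∀ (x : J) (hx : x ≠ p), σ (FreeGroup.of ⟨x, hx⟩) = Equiv.swap p x := by
    intro x hx
    rw [hσ, FreeGroup.lift_apply_of]
  refine ⟨⟨ι, ρ, hretr, fun x hx => hιof x hx⟩, ?_, ?_⟩
  · rintro ⟨x, hx⟩
    refine ⟨ι (FreeGroup.of ⟨x, hx⟩), fun h1 => ?_⟩
    have h2 : ρ (ι (FreeGroup.of ⟨x, hx⟩)) = ρ 1 := by rw [h1]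
    rw [map_one] at h2
    rw [hιof x hx, key x hx] at h2
    have h3 : σ (FreeGroup.of ⟨x, hx⟩) = 1 := by rw [h2, map_one]
    rw [hσof x hx] at h3
    have h4 : Equiv.swap p x p = x := Equiv.swap_apply_left p x
    rw [h3] at h4
    exact hx (h4.symm ▸ rfl)
  · rintro ⟨x, y, hx, hy, hxy⟩
    refine ⟨ι (FreeGroup.of ⟨x, hx⟩), ι (FreeGroup.of ⟨y, hy⟩), fun h1 => ?_⟩
    have h2 : ρ (ι (FreeGroup.of ⟨x, hx⟩) * ι (FreeGroup.of ⟨y, hy⟩)) =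
        ρ (ι (FreeGroup.of ⟨y, hy⟩) * ι (FreeGroup.of ⟨x, hx⟩)) := by rw [h1]
    rw [map_mul, map_mul, hιof x hx, hιof y hy, key x hx, key y hy] at h2
    have h3 : σ (FreeGroup.of (⟨x, hx⟩ : {x : J // x ≠ p}) * FreeGroup.of ⟨y, hy⟩) =
        σ (FreeGroup.of (⟨y, hy⟩ : {x : J // x ≠ p}) * FreeGroup.of ⟨x, hx⟩) := by rw [h2]
    rw [map_mul, map_mul, hσof x hx, hσof y hy] at h3
    have h4 := congrArg (fun e : Equiv.Perm J => e p) h3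
    simp only [Equiv.Perm.mul_apply] at h4
    rw [Equiv.swap_apply_left, Equiv.swap_apply_left,
      Equiv.swap_apply_of_ne_of_ne hy (Ne.symm hxy),
      Equiv.swap_apply_of_ne_of_ne hx hxy] at h4
    exact hxy h4.symm
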